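/- With yⁿ the piecewise linear interpolation of the implicit Euler scheme for the y-equation, set x_tⁿ := F₁⁻¹(y_tⁿ) and x_t := F₁⁻¹(y_t), where y is the continuous (0, F₁(1))-valued solution of y_t = F₁(x₀) + ∫₀^t (G ∘ F₁⁻¹)(y_s) ds + γθ^β w_t (assumed α-Hölder continuous on [0,T]). Then there exists a constant C' > 0 (depending on T, α, β, θ, μ, γ, w and y but not on n) such that sup_{t∈[0,T]} |x_tⁿ - x_t| ≤ C' · n^{-α} for all n ∈ ℕ*; in particular, xⁿ converges uniformly to x with rate n^{-α}. -/

import Mathlib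

/- Fix α ∈ (0,1], β ∈ (1-α,1), θ > 0, μ ∈ (0,1), γ ∈ ℝ, T > 0, x₀ ∈ (0,1).
F₁(y) = ∫₀^y [v(1-v)]^{-β} dv is a strictly increasing bijection from [0,1]
onto [0,F₁(1)] with inverse F₁⁻¹ (realized via `Function.invFunOn`), Lipschitz
on [0,F₁(1)]; G(y) := θ(μ-y)[y(1-y)]^{-β}. Let w : [0,T] → ℝ be α-Hölder with
w₀ = 0.
STATEMENT 18: With yⁿ the piecewise linear interpolation of the implicit Euler
scheme started at F₁(x₀), set x_tⁿ := F₁⁻¹(y_tⁿ) and x_t := F₁⁻¹(y_t), where y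
is the continuous (0,F₁(1))-valued solution of
y_t = F₁(x₀) + ∫₀^t (G∘F₁⁻¹)(y_s) ds + γθ^β w_t (assumed α-Hölder on [0,T]).
Then there is C' > 0 (independent of n) such that
sup_{t∈[0,T]} |x_tⁿ - x_t| ≤ C' n^{-α} for all n ∈ ℕ*. -/

noncomputable def F1 (β y : ℝ) : ℝ := ∫ v in (0:ℝ)..y, (v * (1 - v)) ^ (-β)

noncomputable def F1inv (β z : ℝ) : ℝ := Function.invFunOn (F1 β) (Set.Icc 0 1) z

noncomputable def G (β θ μ x : ℝ) : ℝ := θ * (μ - x) * (x * (1 - x)) ^ (-β)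

/-- Piecewise linear interpolation of (Y k) at the nodes t_k = kT/n. -/
noncomputable def interp (T : ℝ) (n : ℕ) (Y : ℕ → ℝ) (t : ℝ) : ℝ :=
  Y ⌊t * n / T⌋₊ + (Y (⌊t * n / T⌋₊ + 1) - Y ⌊t * n / T⌋₊) * (t * n / T - ⌊t * n / T⌋₊)

section St18Aux
open Set MeasureTheory intervalIntegral

lemma st18_phi_int {β : ℝ} (hβ0 : 0 < β) (hβ1 : β < 1) {a b : ℝ}
    (ha : a ∈ Icc (0:ℝ) 1) (hb : b ∈ Icc (0:ℝ) 1) :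
    IntervalIntegrable (fun v : ℝ => (v * (1 - v)) ^ (-β)) volume a b := by
  have h01 : IntervalIntegrable (fun v : ℝ => (v * (1 - v)) ^ (-β)) volume 0 1 := by
    rw [intervalIntegrable_iff_integrableOn_Icc_of_le (by norm_num)]
    have hg1 : IntervalIntegrable (fun x : ℝ => x ^ (-β)) volume 0 1 :=
      intervalIntegrable_rpow' (by linarith)
    have hg2 : IntervalIntegrable (fun x : ℝ => (1 - x) ^ (-β)) volume 0 1 := by
      have := (intervalIntegrable_rpow' (a := 0) (b := 1) (r := -β) (by linarith)).comp_sub_left 1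
      exact (by simpa using this : IntervalIntegrable _ volume 1 0).symm
    have hg : IntegrableOn (fun x : ℝ => (2:ℝ) ^ β * (x ^ (-β) + (1 - x) ^ (-β))) (Icc 0 1) volume := by
      have : IntegrableOn (fun x : ℝ => x ^ (-β) + (1 - x) ^ (-β)) (Icc 0 1) volume := by
        have := hg1.add hg2
        rwa [intervalIntegrable_iff_integrableOn_Icc_of_le (by norm_num)] at this
      exact this.const_mul _
    refine Integrable.mono' hg ?_ ?_
    · refine (Measurable.aestronglyMeasurable ?_).restrict
      exact (measurable_id.mul (measurable_const.sub measurable_id)).pow measurable_const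
    · filter_upwards [ae_restrict_mem measurableSet_Icc] with x hx
      obtain ⟨hx0, hx1⟩ := hx
      have hb1 : (0:ℝ) ≤ 1 - x := by linarith
      rw [Real.norm_eq_abs, abs_of_nonneg (Real.rpow_nonneg (by positivity) _),
        Real.mul_rpow hx0 hb1]
      have h2 : (0:ℝ) < 2 ^ β := by positivity
      rcases le_total x (1/2) with hc | hc
      · have h1 : (1 - x) ^ (-β) ≤ 2 ^ β := by
          calc (1 - x) ^ (-β) ≤ (2⁻¹ : ℝ) ^ (-β) :=
                Real.rpow_le_rpow_of_nonpos (by norm_num) (by linarith) (by linarith)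
            _ = 2 ^ β := by
                rw [Real.inv_rpow (by norm_num), Real.rpow_neg (by norm_num), inv_inv]
        have hx' : (0:ℝ) ≤ x ^ (-β) := Real.rpow_nonneg hx0 _
        have h1x : (0:ℝ) ≤ (1-x) ^ (-β) := Real.rpow_nonneg hb1 _
        nlinarith [mul_le_mul_of_nonneg_left h1 hx']
      · have h1 : x ^ (-β) ≤ 2 ^ β := by
          calc x ^ (-β) ≤ (2⁻¹ : ℝ) ^ (-β) :=
                Real.rpow_le_rpow_of_nonpos (by norm_num) (by linarith) (by linarith)
            _ = 2 ^ β := by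
                rw [Real.inv_rpow (by norm_num), Real.rpow_neg (by norm_num), inv_inv]
        have hx' : (0:ℝ) ≤ x ^ (-β) := Real.rpow_nonneg hx0 _
        have h1x : (0:ℝ) ≤ (1-x) ^ (-β) := Real.rpow_nonneg hb1 _
        nlinarith [mul_le_mul_of_nonneg_right h1 h1x]
  exact h01.mono_set (by
    rw [uIcc_of_le (by norm_num : (0:ℝ) ≤ 1)]
    exact uIcc_subset_Icc ha hb)

lemma st18_F1_sub {β : ℝ} (hβ0 : 0 < β) (hβ1 : β < 1) {u v : ℝ}
    (hv : v ∈ Icc (0:ℝ) 1) (hu : u ∈ Icc (0:ℝ) 1) :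
    F1 β u - F1 β v = ∫ x in v..u, (x * (1 - x)) ^ (-β) :=
  integral_interval_sub_left (st18_phi_int hβ0 hβ1 (by norm_num) hu)
    (st18_phi_int hβ0 hβ1 (by norm_num) hv)

lemma st18_F1_gap {β : ℝ} (hβ0 : 0 < β) (hβ1 : β < 1) {u v : ℝ}
    (hv : 0 ≤ v) (hvu : v ≤ u) (hu : u ≤ 1) :
    u - v ≤ F1 β u - F1 β v := by
  rw [st18_F1_sub hβ0 hβ1 ⟨hv, le_trans hvu hu⟩ ⟨le_trans hv hvu, hu⟩]
  have h1 : (∫ x in v..u, (1:ℝ)) = u - v := by simp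
  rw [← h1]
  refine integral_mono_ae_restrict hvu (by simp)
    (st18_phi_int hβ0 hβ1 ⟨hv, le_trans hvu hu⟩ ⟨le_trans hv hvu, hu⟩) ?_
  have h0 : ∀ᵐ (x : ℝ) ∂(volume.restrict (Icc v u)), x ≠ 0 :=
    ae_restrict_of_ae (ae_iff.mpr (by simp))
  have h1' : ∀ᵐ (x : ℝ) ∂(volume.restrict (Icc v u)), x ≠ 1 :=
    ae_restrict_of_ae (ae_iff.mpr (by simp))
  filter_upwards [ae_restrict_mem measurableSet_Icc, h0, h1'] with x hx hx0 hx1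
  have hxp : 0 < x := lt_of_le_of_ne (le_trans hv hx.1) (Ne.symm hx0)
  have hx1' : x < 1 := lt_of_le_of_ne (le_trans hx.2 hu) hx1
  exact Real.one_le_rpow_of_pos_of_le_one_of_nonpos (by nlinarith) (by nlinarith)
    (by linarith)

lemma st18_F1_strictMonoOn {β : ℝ} (hβ0 : 0 < β) (hβ1 : β < 1) :
    StrictMonoOn (F1 β) (Icc (0:ℝ) 1) := by
  intro v hv u hu hvu
  have := st18_F1_gap hβ0 hβ1 hv.1 hvu.le hu.2
  linarith

lemma st18_F1_zero (β : ℝ) : F1 β 0 = 0 := by simp [F1]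

lemma st18_F1_contOn {β : ℝ} (hβ0 : 0 < β) (hβ1 : β < 1) :
    ContinuousOn (F1 β) (Icc (0:ℝ) 1) := by
  have h := continuousOn_primitive_interval (a := (0:ℝ)) (b := 1) (μ := volume)
    (f := fun v : ℝ => (v * (1 - v)) ^ (-β)) ?_
  · rwa [uIcc_of_le (by norm_num : (0:ℝ) ≤ 1)] at h
  · rw [uIcc_of_le (by norm_num : (0:ℝ) ≤ 1)]
    rw [← intervalIntegrable_iff_integrableOn_Icc_of_le (by norm_num)]
    exact st18_phi_int hβ0 hβ1 (by norm_num) (by norm_num)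

lemma st18_F1_one_pos {β : ℝ} (hβ0 : 0 < β) (hβ1 : β < 1) : 0 < F1 β 1 := by
  have := st18_F1_gap hβ0 hβ1 (le_refl 0) zero_le_one le_rfl
  rw [st18_F1_zero] at this; linarith

lemma st18_surj {β : ℝ} (hβ0 : 0 < β) (hβ1 : β < 1) {z : ℝ}
    (hz : z ∈ Icc 0 (F1 β 1)) : ∃ x ∈ Icc (0:ℝ) 1, F1 β x = z := by
  have h := intermediate_value_Icc (by norm_num : (0:ℝ) ≤ 1) (st18_F1_contOn hβ0 hβ1)
  rw [st18_F1_zero] at h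
  exact h hz

lemma st18_F1inv_spec {β : ℝ} (hβ0 : 0 < β) (hβ1 : β < 1) {z : ℝ}
    (hz : z ∈ Icc 0 (F1 β 1)) :
    F1inv β z ∈ Icc (0:ℝ) 1 ∧ F1 β (F1inv β z) = z := by
  obtain ⟨x, hx, hfx⟩ := st18_surj hβ0 hβ1 hz
  exact ⟨Function.invFunOn_mem ⟨x, hx, hfx⟩, Function.invFunOn_eq ⟨x, hx, hfx⟩⟩

lemma st18_F1inv_F1 {β : ℝ} (hβ0 : 0 < β) (hβ1 : β < 1) {x : ℝ}
    (hx : x ∈ Icc (0:ℝ) 1) : F1inv β (F1 β x) = x := by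
  have hz : F1 β x ∈ Icc 0 (F1 β 1) := by
    constructor
    · have := st18_F1_gap hβ0 hβ1 le_rfl hx.1 hx.2
      rw [st18_F1_zero] at this; linarith [hx.1]
    · have := st18_F1_gap hβ0 hβ1 hx.1 hx.2 le_rfl
      linarith [hx.2]
  obtain ⟨hmem, heq⟩ := st18_F1inv_spec hβ0 hβ1 hz
  exact (st18_F1_strictMonoOn hβ0 hβ1).injOn hmem hx heq

lemma st18_F1inv_le {β : ℝ} (hβ0 : 0 < β) (hβ1 : β < 1) {z1 z2 : ℝ}
    (h1 : z1 ∈ Icc 0 (F1 β 1)) (h2 : z2 ∈ Icc 0 (F1 β 1)) (h12 : z1 ≤ z2) :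
    F1inv β z1 ≤ F1inv β z2 ∧ F1inv β z2 - F1inv β z1 ≤ z2 - z1 := by
  obtain ⟨hm1, he1⟩ := st18_F1inv_spec hβ0 hβ1 h1
  obtain ⟨hm2, he2⟩ := st18_F1inv_spec hβ0 hβ1 h2
  have hle : F1inv β z1 ≤ F1inv β z2 := by
    by_contra hlt
    push_neg at hlt
    have := st18_F1_strictMonoOn hβ0 hβ1 hm2 hm1 hlt
    rw [he1, he2] at this; linarith
  refine ⟨hle, ?_⟩
  have := st18_F1_gap hβ0 hβ1 hm1.1 hle hm2.2
  rw [he1, he2] at this; linarith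

lemma st18_F1inv_lip {β : ℝ} (hβ0 : 0 < β) (hβ1 : β < 1) {z1 z2 : ℝ}
    (h1 : z1 ∈ Icc 0 (F1 β 1)) (h2 : z2 ∈ Icc 0 (F1 β 1)) :
    |F1inv β z1 - F1inv β z2| ≤ |z1 - z2| := by
  rcases le_total z1 z2 with h | h
  · obtain ⟨ha, hb⟩ := st18_F1inv_le hβ0 hβ1 h1 h2 h
    rw [abs_sub_comm, abs_of_nonneg (by linarith), abs_sub_comm, abs_of_nonneg (by linarith)]
    linarith
  · obtain ⟨ha, hb⟩ := st18_F1inv_le hβ0 hβ1 h2 h1 h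
    rw [abs_of_nonneg (by linarith), abs_of_nonneg (by linarith)]
    linarith

lemma st18_F1inv_mem_Ioo {β : ℝ} (hβ0 : 0 < β) (hβ1 : β < 1) {z : ℝ}
    (hz : z ∈ Ioo 0 (F1 β 1)) : F1inv β z ∈ Ioo (0:ℝ) 1 := by
  obtain ⟨hm, he⟩ := st18_F1inv_spec hβ0 hβ1 ⟨hz.1.le, hz.2.le⟩
  constructor
  · rcases hm.1.lt_or_eq with h | h
    · exact h
    · exfalso; rw [← h, st18_F1_zero] at he; exact hz.1.ne' he.symm
  · rcases hm.2.lt_or_eq with h | h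
    · exact h
    · exfalso; rw [h] at he; exact hz.2.ne' he

/-- candidate derivative of G -/
noncomputable def Gd (β θ μ x : ℝ) : ℝ :=
  θ * (-1) * (x * (1 - x)) ^ (-β) +
    θ * (μ - x) * ((1 - 2 * x) * (-β) * (x * (1 - x)) ^ (-β - 1))

lemma st18_F1_hasDeriv {β : ℝ} (hβ0 : 0 < β) (hβ1 : β < 1) {x : ℝ}
    (hx : x ∈ Ioo (0:ℝ) 1) :
    HasDerivAt (F1 β) ((x * (1 - x)) ^ (-β)) x := by
  have hu : 0 < x * (1 - x) := by nlinarith [hx.1, hx.2]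
  refine integral_hasDerivAt_right
    (st18_phi_int hβ0 hβ1 (by norm_num) ⟨hx.1.le, hx.2.le⟩) ?_ ?_
  · exact (((measurable_id.mul (measurable_const.sub measurable_id)).pow
      measurable_const).stronglyMeasurable).stronglyMeasurableAtFilter
  · have h : ContinuousAt (fun v : ℝ => v * (1 - v)) x := by fun_prop
    exact h.rpow_const (Or.inl hu.ne')

lemma st18_G_hasDeriv {β θ μ x : ℝ} (hx : x ∈ Ioo (0:ℝ) 1) :
    HasDerivAt (G β θ μ) (Gd β θ μ x) x := by
  have hu : 0 < x * (1 - x) := by nlinarith [hx.1, hx.2]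
  have h1 : HasDerivAt (fun v : ℝ => v * (1 - v)) (1 - 2 * x) x := by
    have := (hasDerivAt_id x).mul ((hasDerivAt_const x 1).sub (hasDerivAt_id x))
    exact this.congr_deriv (by simp only [id_eq, Pi.sub_apply]; ring)
  have h2 : HasDerivAt (fun v : ℝ => (v * (1 - v)) ^ (-β))
      ((1 - 2 * x) * (-β) * (x * (1 - x)) ^ (-β - 1)) x :=
    h1.rpow_const (Or.inl hu.ne')
  have h3 : HasDerivAt (fun v : ℝ => θ * (μ - v)) (θ * (-1)) x := by
    have := (hasDerivAt_const x μ).sub (hasDerivAt_id x)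
    have := this.const_mul θ
    exact this.congr_deriv (by ring)
  exact h3.mul h2

lemma st18_Gd_le {β θ μ x : ℝ} (hβ0 : 0 < β) (hθ : 0 < θ)
    (hμ : μ ∈ Ioo (0:ℝ) 1) (hx : x ∈ Ioo (0:ℝ) 1) :
    Gd β θ μ x ≤ 2 * θ * β * (x * (1 - x)) ^ (-β) := by
  set u := x * (1 - x) with hu_def
  have hu : 0 < u := by nlinarith [hx.1, hx.2]
  have hp : (0:ℝ) < u ^ (-β) := Real.rpow_pos_of_pos hu _
  have hq : (0:ℝ) < u ^ (-β - 1) := Real.rpow_pos_of_pos hu _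
  have h4 : u ^ (-β - 1) * u = u ^ (-β) := by
    rw [← Real.rpow_add_one hu.ne' (-β - 1)]; congr 1; ring
  have h2 : -2 * u ≤ (μ - x) * (1 - 2 * x) := by nlinarith [hμ.1, hμ.2, hx.1, hx.2]
  have h3 : (-2 * u) * u ^ (-β - 1) ≤ (μ - x) * (1 - 2 * x) * u ^ (-β - 1) :=
    mul_le_mul_of_nonneg_right h2 hq.le
  have h5 : -2 * u ^ (-β) ≤ (μ - x) * (1 - 2 * x) * u ^ (-β - 1) := by
    calc -2 * u ^ (-β) = (-2 * u) * u ^ (-β - 1) := by rw [mul_assoc, mul_comm u, h4]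
      _ ≤ _ := h3
  have hθβ : 0 < θ * β := by positivity
  unfold Gd
  rw [← hu_def]
  nlinarith [mul_le_mul_of_nonneg_left h5 hθβ.le]


lemma st18_G_onesided {β θ μ : ℝ} (hβ0 : 0 < β) (hβ1 : β < 1) (hθ : 0 < θ)
    (hμ : μ ∈ Ioo (0:ℝ) 1) {u v : ℝ} (hu : u ∈ Ioo (0:ℝ) 1) (hv : v ∈ Ioo (0:ℝ) 1)
    (hvu : v ≤ u) :
    G β θ μ u - G β θ μ v ≤ 2 * θ * β * (F1 β u - F1 β v) := by
  have hsub : Icc v u ⊆ Ioo (0:ℝ) 1 := fun x hx => ⟨lt_of_lt_of_le hv.1 hx.1,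
    lt_of_le_of_lt hx.2 hu.2⟩
  set H : ℝ → ℝ := fun x => 2 * θ * β * F1 β x - G β θ μ x with hH
  have hd : ∀ x ∈ Ioo (0:ℝ) 1, HasDerivAt H
      (2 * θ * β * ((x * (1 - x)) ^ (-β)) - Gd β θ μ x) x := fun x hx =>
    ((st18_F1_hasDeriv hβ0 hβ1 hx).const_mul _).sub (st18_G_hasDeriv hx)
  have hmono : MonotoneOn H (Icc v u) := by
    refine monotoneOn_of_deriv_nonneg (convex_Icc v u) ?_ ?_ ?_
    · exact fun x hx => (hd x (hsub hx)).continuousAt.continuousWithinAt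
    · intro x hx
      rw [interior_Icc] at hx
      exact (hd x (hsub (Ioo_subset_Icc_self hx))).differentiableAt.differentiableWithinAt
    · intro x hx
      rw [interior_Icc] at hx
      rw [(hd x (hsub (Ioo_subset_Icc_self hx))).deriv]
      have := st18_Gd_le hβ0 hθ hμ (hsub (Ioo_subset_Icc_self hx))
      linarith
  have := hmono (left_mem_Icc.mpr hvu) (right_mem_Icc.mpr hvu) hvu
  simp only [hH] at this
  linarith

lemma st18_quad_ge {a b x : ℝ} (hax : a ≤ x) (hxb : x ≤ b) :
    min (a * (1 - a)) (b * (1 - b)) ≤ x * (1 - x) := by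
  rcases le_total (a + x) 1 with h | h
  · refine le_trans (min_le_left _ _) ?_; nlinarith
  · refine le_trans (min_le_right _ _) ?_; nlinarith

lemma st18_G_lip {β θ μ : ℝ} (hβ0 : 0 < β) (hβ1 : β < 1) (hθ : 0 < θ)
    (hμ : μ ∈ Ioo (0:ℝ) 1) {a b δ : ℝ} (ha : a ∈ Ioo (0:ℝ) 1) (hb : b ∈ Ioo (0:ℝ) 1)
    (hδ : 0 < δ) (hδle : ∀ x ∈ Icc a b, δ ≤ x * (1 - x)) {u v : ℝ}
    (hu : u ∈ Icc a b) (hv : v ∈ Icc a b) :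
    |G β θ μ u - G β θ μ v| ≤ (θ * δ ^ (-β) + θ * β * δ ^ (-β - 1)) * |u - v| := by
  have hab : Icc a b ⊆ Ioo (0:ℝ) 1 := fun x hx => ⟨lt_of_lt_of_le ha.1 hx.1,
    lt_of_le_of_lt hx.2 hb.2⟩
  have key := Convex.norm_image_sub_le_of_norm_hasDerivWithin_le
    (f := G β θ μ) (f' := Gd β θ μ) (s := Icc a b)
    (fun x hx => (st18_G_hasDeriv (hab hx)).hasDerivWithinAt)
    (C := θ * δ ^ (-β) + θ * β * δ ^ (-β - 1)) ?_ (convex_Icc a b) hv hu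
  · simpa [Real.norm_eq_abs] using key
  · intro x hx
    have hx01 := hab hx
    have hup : 0 < x * (1 - x) := by nlinarith [hx01.1, hx01.2]
    have hle1 : (x * (1 - x)) ^ (-β) ≤ δ ^ (-β) :=
      Real.rpow_le_rpow_of_nonpos hδ (hδle x hx) (by linarith)
    have hle2 : (x * (1 - x)) ^ (-β - 1) ≤ δ ^ (-β - 1) :=
      Real.rpow_le_rpow_of_nonpos hδ (hδle x hx) (by linarith)
    have hp : (0:ℝ) ≤ (x * (1 - x)) ^ (-β) := Real.rpow_nonneg hup.le _
    have hq : (0:ℝ) ≤ (x * (1 - x)) ^ (-β - 1) := Real.rpow_nonneg hup.le _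
    rw [Real.norm_eq_abs]
    have habs : |Gd β θ μ x| ≤ θ * (x * (1-x)) ^ (-β) + θ * β * (x * (1-x)) ^ (-β - 1) := by
      unfold Gd
      refine le_trans (abs_add_le _ _) ?_
      have e1 : |θ * (-1) * (x * (1 - x)) ^ (-β)| = θ * (x * (1 - x)) ^ (-β) := by
        rw [abs_mul, abs_mul]
        rw [abs_of_nonneg hθ.le, abs_of_nonneg hp]
        norm_num
      have e2 : |θ * (μ - x) * ((1 - 2 * x) * (-β) * (x * (1 - x)) ^ (-β - 1))|
          ≤ θ * β * (x * (1 - x)) ^ (-β - 1) := by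
        rw [abs_mul, abs_mul, abs_mul, abs_mul]
        rw [abs_of_nonneg hθ.le, abs_of_nonneg hq, abs_of_nonpos (by linarith : -β ≤ 0)]
        have hμx : |μ - x| ≤ 1 := by
          rw [abs_le]; constructor <;> nlinarith [hμ.1, hμ.2, hx01.1, hx01.2]
        have h2x : |1 - 2 * x| ≤ 1 := by
          rw [abs_le]; constructor <;> nlinarith [hx01.1, hx01.2]
        have h1 : 0 ≤ |μ - x| := abs_nonneg _
        have h2 : 0 ≤ |1 - 2*x| := abs_nonneg _
        have h3 : |μ - x| * |1 - 2 * x| ≤ 1 := by nlinarith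
        have h4 : (0:ℝ) ≤ θ * β * (x * (1 - x)) ^ (-β - 1) := by positivity
        nlinarith [mul_le_mul_of_nonneg_right h3 h4]
      linarith
    refine le_trans habs ?_
    have hθβ : (0:ℝ) ≤ θ * β := by positivity
    nlinarith

lemma st18_holder_cont {α C T : ℝ} (hα : 0 < α) {u : ℝ → ℝ}
    (h : ∀ s ∈ Icc (0:ℝ) T, ∀ t ∈ Icc (0:ℝ) T, |u t - u s| ≤ C * |t - s| ^ α) :
    ContinuousOn u (Icc (0:ℝ) T) := by
  intro s hs
  rw [ContinuousWithinAt, tendsto_iff_dist_tendsto_zero]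
  have hC' : ∀ t ∈ Icc (0:ℝ) T, |u t - u s| ≤ |C| * |t - s| ^ α := by
    intro t ht
    refine le_trans (h s hs t ht) ?_
    have h1 : (0:ℝ) ≤ |t - s| ^ α := Real.rpow_nonneg (abs_nonneg _) _
    nlinarith [le_abs_self C, abs_nonneg C]
  refine squeeze_zero' (g := fun t => |C| * |t - s| ^ α) (Filter.Eventually.of_forall fun t => dist_nonneg) ?_ ?_
  · filter_upwards [self_mem_nhdsWithin] with t ht
    rw [Real.dist_eq]
    exact hC' t ht
  · have h1 : ContinuousAt (fun t : ℝ => |C| * |t - s| ^ α) s := by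
      have h2 : ContinuousAt (fun t : ℝ => |t - s|) s := by fun_prop
      have h3 : ContinuousAt (fun z : ℝ => z ^ α) (|s - s|) := by
        simpa using Real.continuousAt_rpow_const 0 α (Or.inr hα.le)
      have h4 : ContinuousAt (fun t : ℝ => |t - s| ^ α) s :=
        ContinuousAt.comp (g := fun z : ℝ => z ^ α) (f := fun t : ℝ => |t - s|) h3 h2
      exact h4.const_mul _
    have h0 : |C| * |s - s| ^ α = 0 := by
      simp [Real.zero_rpow hα.ne']
    have := h1.continuousWithinAt (s := Icc (0:ℝ) T)
    rw [ContinuousWithinAt, h0] at this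
    exact this

lemma st18_onesided_f {β θ μ : ℝ} (hβ0 : 0 < β) (hβ1 : β < 1) (hθ : 0 < θ)
    (hμ : μ ∈ Ioo (0:ℝ) 1) {z1 z2 : ℝ} (h1 : z1 ∈ Ioo 0 (F1 β 1))
    (h2 : z2 ∈ Ioo 0 (F1 β 1)) :
    (G β θ μ (F1inv β z1) - G β θ μ (F1inv β z2)) * (z1 - z2)
      ≤ 2 * θ * β * (z1 - z2) ^ 2 := by
  have key : ∀ p q : ℝ, p ∈ Ioo 0 (F1 β 1) → q ∈ Ioo 0 (F1 β 1) → q ≤ p →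
      (G β θ μ (F1inv β p) - G β θ μ (F1inv β q)) * (p - q) ≤ 2 * θ * β * (p - q) ^ 2 := by
    intro p q hp hq hqp
    have hip := st18_F1inv_mem_Ioo hβ0 hβ1 hp
    have hiq := st18_F1inv_mem_Ioo hβ0 hβ1 hq
    have hle := (st18_F1inv_le hβ0 hβ1 ⟨hq.1.le, hq.2.le⟩ ⟨hp.1.le, hp.2.le⟩ hqp).1
    have hGle := st18_G_onesided hβ0 hβ1 hθ hμ hip hiq hle
    rw [(st18_F1inv_spec hβ0 hβ1 ⟨hp.1.le, hp.2.le⟩).2,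
      (st18_F1inv_spec hβ0 hβ1 ⟨hq.1.le, hq.2.le⟩).2] at hGle
    nlinarith
  rcases le_total z2 z1 with h | h
  · exact key z1 z2 h1 h2 h
  · have := key z2 z1 h2 h1 h
    nlinarith

lemma st18_step {K h d E fd : ℝ} (hK : 0 < K) (hh : 0 ≤ h) (hhK : h * K ≤ 1/2)
    (hone : fd * d ≤ K * d ^ 2) (hd : d = E + h * fd) :
    |d| ≤ (1 + 2 * h * K) * |E| := by
  rcases eq_or_ne d 0 with h0 | h0
  · rw [h0, abs_zero]
    positivity
  · have habs : 0 < |d| := abs_pos.mpr h0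
    have hdE : d * E ≤ |d| * |E| := le_trans (le_abs_self _) (by rw [abs_mul])
    have hdd : d ^ 2 = d * E + h * (fd * d) := by rw [hd]; ring
    have h1 : d ^ 2 ≤ |d| * |E| + h * K * d ^ 2 := by
      nlinarith [mul_le_mul_of_nonneg_left hone hh]
    have hd2 : d ^ 2 = |d| * |d| := by rw [sq, ← abs_mul_abs_self]
    have h2 : (1 - h * K) * |d| ≤ |E| := by
      rw [← mul_le_mul_iff_of_pos_right habs]
      nlinarith [h1, hd2]
    have hhK0 : 0 ≤ h * K := by positivity
    nlinarith [mul_le_mul_of_nonneg_left h2 (show (0:ℝ) ≤ 1 + 2 * h * K by positivity),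
      abs_nonneg d, abs_nonneg E,
      mul_nonneg (mul_nonneg hhK0 (by linarith : (0:ℝ) ≤ 1 - 2 * (h * K))) (abs_nonneg d)]

lemma st18_gronwall {c B : ℝ} (hc : 0 < c) (hB : 0 ≤ B) {n : ℕ} (e : ℕ → ℝ)
    (he0 : e 0 = 0) (hrec : ∀ k < n, e (k + 1) ≤ (1 + c) * (e k + B)) :
    ∀ k ≤ n, e k ≤ (1 + c) * B / c * ((1 + c) ^ k - 1) := by
  intro k hk
  induction k with
  | zero => simp [he0]
  | succ k ih =>
    have hk' : k < n := lt_of_lt_of_le (Nat.lt_succ_self k) hk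
    have ihk := ih (le_of_lt hk')
    have hrk := hrec k hk'
    have hpow : (1:ℝ) ≤ (1 + c) ^ k := one_le_pow₀ (by linarith)
    have : (1 + c) * ((1 + c) * B / c * ((1 + c) ^ k - 1) + B)
        = (1 + c) * B / c * ((1 + c) ^ (k + 1) - 1) := by
      field_simp
      ring
    calc e (k + 1) ≤ (1 + c) * (e k + B) := hrk
      _ ≤ (1 + c) * ((1 + c) * B / c * ((1 + c) ^ k - 1) + B) := by nlinarith
      _ = _ := this

lemma st18_interp_cases {T : ℝ} (hT : 0 < T) {n : ℕ} (hn : 0 < n) (Z : ℕ → ℝ) {t : ℝ}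
    (ht : t ∈ Icc (0:ℝ) T) :
    (interp T n Z t = Z n ∧ t = T) ∨
    ∃ k : ℕ, k < n ∧ ∃ lam : ℝ, 0 ≤ lam ∧ lam ≤ 1 ∧
      interp T n Z t = (1 - lam) * Z k + lam * Z (k + 1) ∧
      (k : ℝ) * T / n ≤ t ∧ t ≤ ((k : ℝ) + 1) * T / n := by
  have hnR : (0:ℝ) < n := Nat.cast_pos.mpr hn
  set q : ℝ := t * n / T with hq_def
  have hq0 : 0 ≤ q := div_nonneg (mul_nonneg ht.1 hnR.le) hT.le
  have hfl : (⌊q⌋₊ : ℝ) ≤ q := Nat.floor_le hq0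
  have hlt : q < ⌊q⌋₊ + 1 := Nat.lt_floor_add_one q
  have hqn : q ≤ n := by
    rw [hq_def, div_le_iff₀ hT]
    nlinarith [ht.2]
  rcases lt_or_ge ⌊q⌋₊ n with hkn | hkn
  · right
    refine ⟨⌊q⌋₊, hkn, q - ⌊q⌋₊, by linarith, by linarith, ?_, ?_, ?_⟩
    · show Z ⌊q⌋₊ + (Z (⌊q⌋₊ + 1) - Z ⌊q⌋₊) * (q - ⌊q⌋₊) = _
      ring
    · rw [div_le_iff₀ hnR]
      have : (⌊q⌋₊ : ℝ) * T ≤ q * T := by nlinarith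
      rw [hq_def] at this
      calc (⌊q⌋₊ : ℝ) * T ≤ t * n / T * T := this
        _ = t * n := by field_simp
    · rw [le_div_iff₀ hnR]
      have : q * T ≤ ((⌊q⌋₊ : ℝ) + 1) * T := by nlinarith
      rw [hq_def] at this
      calc t * n = t * n / T * T := by field_simp
        _ ≤ ((⌊q⌋₊ : ℝ) + 1) * T := this
  · left
    have hkq : (n : ℝ) ≤ q := le_trans (Nat.cast_le.mpr hkn) hfl
    have hqe : q = n := le_antisymm hqn hkq
    have hfn : ⌊q⌋₊ = n := by
      have h1 : ⌊q⌋₊ ≤ n := by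
        have : (⌊q⌋₊ : ℝ) ≤ (n : ℝ) := by rw [← hqe]; exact hfl
        exact_mod_cast this
      omega
    have htT : t = T := by
      have h2 : t * (n:ℝ) = T * n := by
        rw [hq_def, div_eq_iff hT.ne'] at hqe
        linarith
      exact mul_right_cancel₀ hnR.ne' h2
    refine ⟨?_, htT⟩
    show Z ⌊q⌋₊ + (Z (⌊q⌋₊ + 1) - Z ⌊q⌋₊) * (q - ⌊q⌋₊) = Z n
    rw [hfn, hqe]
    ring

end St18Aux

set_option maxHeartbeats 2000000 in
open Set MeasureTheory intervalIntegral in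
theorem stmt18 (α β θ μ γ T x₀ : ℝ) (hα : α ∈ Set.Ioc (0:ℝ) 1)
    (hβ : β ∈ Set.Ioo (1 - α) 1) (hθ : 0 < θ) (hμ : μ ∈ Set.Ioo (0:ℝ) 1)
    (hT : 0 < T) (hx₀ : x₀ ∈ Set.Ioo (0:ℝ) 1)
    (w : ℝ → ℝ) (hw0 : w 0 = 0)
    (hw : ∃ C : ℝ, ∀ s ∈ Set.Icc (0:ℝ) T, ∀ t ∈ Set.Icc (0:ℝ) T,
      |w t - w s| ≤ C * |t - s| ^ α)
    (y : ℝ → ℝ)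
    (hym : ∀ t ∈ Set.Icc (0:ℝ) T, y t ∈ Set.Ioo 0 (F1 β 1))
    (hye : ∀ t ∈ Set.Icc (0:ℝ) T,
      y t = F1 β x₀ + (∫ s in (0:ℝ)..t, G β θ μ (F1inv β (y s))) + γ * θ ^ β * w t)
    (hyH : ∃ C : ℝ, ∀ s ∈ Set.Icc (0:ℝ) T, ∀ t ∈ Set.Icc (0:ℝ) T,
      |y t - y s| ≤ C * |t - s| ^ α)
    (Y : ℕ → ℕ → ℝ)
    (hY : ∀ n : ℕ, 0 < n →
      Y n 0 = F1 β x₀ ∧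
      (∀ k < n, Y n (k + 1) = Y n k + (T / n) * G β θ μ (F1inv β (Y n (k + 1))) +
        γ * θ ^ β * (w (((k : ℝ) + 1) * T / n) - w ((k : ℝ) * T / n))) ∧
      (∀ k ≤ n, Y n k ∈ Set.Ioo 0 (F1 β 1))) :
    ∃ C' : ℝ, 0 < C' ∧ ∀ n : ℕ, 0 < n → ∀ t ∈ Set.Icc (0:ℝ) T,
      |F1inv β (interp T n (Y n) t) - F1inv β (y t)| ≤ C' * (n : ℝ) ^ (-α) := by
  obtain ⟨hα0, hα1⟩ := hα
  obtain ⟨hβα, hβ1⟩ := hβ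
  have hβ0 : 0 < β := by linarith
  set K : ℝ := 2 * θ * β with hK_def
  have hK : 0 < K := by rw [hK_def]; positivity
  obtain ⟨Cy0, hCy0⟩ := hyH
  set Cy : ℝ := |Cy0| + 1 with hCy_def
  have hCy : 0 < Cy := by rw [hCy_def]; positivity
  have hyHol : ∀ s ∈ Set.Icc (0:ℝ) T, ∀ t ∈ Set.Icc (0:ℝ) T,
      |y t - y s| ≤ Cy * |t - s| ^ α := by
    intro s hs t ht
    refine le_trans (hCy0 s hs t ht) ?_
    have h1 : (0:ℝ) ≤ |t - s| ^ α := Real.rpow_nonneg (abs_nonneg _) _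
    rw [hCy_def]
    nlinarith [le_abs_self Cy0]
  have hycont : ContinuousOn y (Set.Icc (0:ℝ) T) := st18_holder_cont hα0 hyHol
  have h0T : (0:ℝ) ∈ Set.Icc (0:ℝ) T := Set.left_mem_Icc.mpr hT.le
  obtain ⟨smin, hsmin_mem, hsmin'⟩ := isCompact_Icc.exists_isMinOn ⟨0, h0T⟩ hycont
  obtain ⟨smax, hsmax_mem, hsmax'⟩ := isCompact_Icc.exists_isMaxOn ⟨0, h0T⟩ hycont
  have hsmin : ∀ t ∈ Set.Icc (0:ℝ) T, y smin ≤ y t := fun t ht => hsmin' ht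
  have hsmax : ∀ t ∈ Set.Icc (0:ℝ) T, y t ≤ y smax := fun t ht => hsmax' ht
  have hm : y smin ∈ Set.Ioo 0 (F1 β 1) := hym smin hsmin_mem
  have hM : y smax ∈ Set.Ioo 0 (F1 β 1) := hym smax hsmax_mem
  have hmM : y smin ≤ y smax := hsmin smax hsmax_mem
  have hymem : ∀ t ∈ Set.Icc (0:ℝ) T, y t ∈ Set.Icc (y smin) (y smax) :=
    fun t ht => ⟨hsmin t ht, hsmax t ht⟩
  have hzmem : ∀ z ∈ Set.Icc (y smin) (y smax), z ∈ Set.Icc 0 (F1 β 1) := fun z hz =>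
    ⟨(hm.1.trans_le hz.1).le, (hz.2.trans_lt hM.2).le⟩
  have ha : F1inv β (y smin) ∈ Set.Ioo (0:ℝ) 1 := st18_F1inv_mem_Ioo hβ0 hβ1 hm
  have hb : F1inv β (y smax) ∈ Set.Ioo (0:ℝ) 1 := st18_F1inv_mem_Ioo hβ0 hβ1 hM
  set a : ℝ := F1inv β (y smin) with ha_def
  set b : ℝ := F1inv β (y smax) with hb_def
  set δ : ℝ := min (a * (1 - a)) (b * (1 - b)) with hδ_def
  have hδ : 0 < δ := lt_min (by nlinarith [ha.1, ha.2]) (by nlinarith [hb.1, hb.2])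
  set L : ℝ := θ * δ ^ (-β) + θ * β * δ ^ (-β - 1) with hL_def
  have hL : 0 < L := by
    have h1 := Real.rpow_pos_of_pos hδ (-β)
    have h2 := Real.rpow_pos_of_pos hδ (-β - 1)
    rw [hL_def]; positivity
  have hf_lip : ∀ z1 ∈ Set.Icc (y smin) (y smax), ∀ z2 ∈ Set.Icc (y smin) (y smax),
      |G β θ μ (F1inv β z1) - G β θ μ (F1inv β z2)| ≤ L * |z1 - z2| := by
    intro z1 h1 z2 h2
    have hmem : ∀ z ∈ Set.Icc (y smin) (y smax), F1inv β z ∈ Set.Icc a b := fun z hz =>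
      ⟨(st18_F1inv_le hβ0 hβ1 (hzmem _ (Set.left_mem_Icc.mpr hmM)) (hzmem z hz) hz.1).1,
       (st18_F1inv_le hβ0 hβ1 (hzmem z hz) (hzmem _ (Set.right_mem_Icc.mpr hmM)) hz.2).1⟩
    refine le_trans (st18_G_lip hβ0 hβ1 hθ hμ ha hb hδ
      (fun x hx => st18_quad_ge hx.1 hx.2) (hmem z1 h1) (hmem z2 h2)) ?_
    exact mul_le_mul_of_nonneg_left
      (st18_F1inv_lip hβ0 hβ1 (hzmem z1 h1) (hzmem z2 h2)) hL.le
  have hfyH : ∀ s ∈ Set.Icc (0:ℝ) T, ∀ t ∈ Set.Icc (0:ℝ) T,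
      |G β θ μ (F1inv β (y t)) - G β θ μ (F1inv β (y s))| ≤ L * Cy * |t - s| ^ α := by
    intro s hs t ht
    refine le_trans (hf_lip _ (hymem t ht) _ (hymem s hs)) ?_
    rw [mul_assoc]
    exact mul_le_mul_of_nonneg_left (hyHol s hs t ht) hL.le
  have hfycont : ContinuousOn (fun s => G β θ μ (F1inv β (y s))) (Set.Icc (0:ℝ) T) :=
    st18_holder_cont hα0 hfyH
  have hfyint : ∀ u ∈ Set.Icc (0:ℝ) T, ∀ v ∈ Set.Icc (0:ℝ) T,
      IntervalIntegrable (fun s => G β θ μ (F1inv β (y s))) MeasureTheory.volume u v :=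
    fun u hu v hv => (hfycont.mono (Set.uIcc_subset_Icc hu hv)).intervalIntegrable
  have hy0 : y 0 = F1 β x₀ := by
    have := hye 0 h0T
    simpa [hw0] using this
  set C1 : ℝ := L * Cy / K * Real.exp (2 * K * T) with hC1_def
  have hC1 : 0 < C1 := by rw [hC1_def]; positivity
  have hnode : ∀ n : ℕ, 0 < n → (T / (n:ℝ)) * K ≤ 1/2 → ∀ k ≤ n,
      |Y n k - y ((k : ℝ) * T / n)| ≤ C1 * (T / n) ^ α := by
    intro n hn hsmall
    obtain ⟨hY0, hYrec, hYmem⟩ := hY n hn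
    have hnR : (0:ℝ) < n := Nat.cast_pos.mpr hn
    have hh : (0:ℝ) < T / n := by positivity
    have htk : ∀ k : ℕ, k ≤ n → (k : ℝ) * T / n ∈ Set.Icc (0:ℝ) T := by
      intro k hk
      have hkn : (k:ℝ) ≤ n := Nat.cast_le.mpr hk
      constructor
      · positivity
      · rw [div_le_iff₀ hnR]; nlinarith
    have hc : (0:ℝ) < 2 * (T/n) * K := by positivity
    have hhα : (0:ℝ) < (T/n) ^ α := Real.rpow_pos_of_pos hh _
    have hB0 : (0:ℝ) ≤ L * Cy * (T/n) ^ α * (T/n) := by positivity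
    have hrec : ∀ k < n, |Y n (k+1) - y (((k+1 : ℕ) : ℝ) * T / n)| ≤
        (1 + 2*(T/n)*K) * (|Y n k - y ((k:ℝ) * T / n)| + L * Cy * (T/n) ^ α * (T/n)) := by
      intro k hk
      push_cast
      have hk1 : k + 1 ≤ n := hk
      have ht0 : (k:ℝ) * T / n ∈ Set.Icc (0:ℝ) T := htk k hk.le
      have ht1 : ((k:ℝ) + 1) * T / n ∈ Set.Icc (0:ℝ) T := by
        have := htk (k+1) hk1
        push_cast at this
        exact this
      have ht1eq : ((k:ℝ)+1) * T / n = (k:ℝ) * T / n + T / n := by field_simp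
      have hyinc : y (((k:ℝ)+1) * T / n) - y ((k:ℝ) * T / n)
          = (∫ s in ((k:ℝ) * T / n)..(((k:ℝ)+1) * T / n), G β θ μ (F1inv β (y s)))
            + γ * θ ^ β * (w (((k:ℝ)+1) * T / n) - w ((k:ℝ) * T / n)) := by
        have e1 := hye _ ht1
        have e0 := hye _ ht0
        have hsub := integral_interval_sub_left (hfyint 0 h0T _ ht1) (hfyint 0 h0T _ ht0)
        linear_combination e1 - e0 + hsub
      have hYinc := hYrec k hk
      have hcons : |(T/n) * G β θ μ (F1inv β (y (((k:ℝ)+1) * T / n)))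
          - ∫ s in ((k:ℝ) * T / n)..(((k:ℝ)+1) * T / n), G β θ μ (F1inv β (y s))|
          ≤ L * Cy * (T/n) ^ α * (T/n) := by
        have heq : (T/n) * G β θ μ (F1inv β (y (((k:ℝ)+1) * T / n)))
            - (∫ s in ((k:ℝ) * T / n)..(((k:ℝ)+1) * T / n), G β θ μ (F1inv β (y s)))
            = - ∫ s in ((k:ℝ) * T / n)..(((k:ℝ)+1) * T / n),
                (G β θ μ (F1inv β (y s)) - G β θ μ (F1inv β (y (((k:ℝ)+1) * T / n)))) := by
          rw [intervalIntegral.integral_sub (hfyint _ ht0 _ ht1) intervalIntegrable_const,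
            intervalIntegral.integral_const, ht1eq]
          simp only [smul_eq_mul]
          ring
        rw [heq, abs_neg]
        have hbd := intervalIntegral.norm_integral_le_of_norm_le_const
          (C := L * Cy * (T/n) ^ α)
          (f := fun s => G β θ μ (F1inv β (y s)) - G β θ μ (F1inv β (y (((k:ℝ)+1) * T / n))))
          (a := (k:ℝ) * T / n) (b := ((k:ℝ)+1) * T / n) ?_
        · rw [Real.norm_eq_abs] at hbd
          refine le_trans hbd ?_
          rw [ht1eq, show (k:ℝ) * T / n + T / n - (k:ℝ) * T / n = T/n by ring,
            abs_of_pos hh]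
        · intro s hs
          rw [Set.uIoc_of_le (by rw [ht1eq]; linarith)] at hs
          have hsI : s ∈ Set.Icc (0:ℝ) T := ⟨le_trans ht0.1 hs.1.le, le_trans hs.2 ht1.2⟩
          rw [Real.norm_eq_abs]
          refine le_trans (hfyH _ ht1 s hsI) ?_
          have h2 : |s - (((k:ℝ)+1) * T / n)| ≤ T/n := by
            rw [abs_le]
            constructor
            · linarith [hs.1]
            · linarith [hs.2, hh.le]
          refine mul_le_mul_of_nonneg_left ?_ (by positivity)
          exact Real.rpow_le_rpow (abs_nonneg _) h2 hα0.le
      have hone := st18_onesided_f hβ0 hβ1 hθ hμ (hYmem (k+1) hk1) (hym _ ht1)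
      rw [← hK_def] at hone
      have hdE : Y n (k+1) - y (((k:ℝ)+1) * T / n)
          = ((Y n k - y ((k:ℝ) * T / n)) + ((T/n) * G β θ μ (F1inv β (y (((k:ℝ)+1) * T / n)))
              - ∫ s in ((k:ℝ) * T / n)..(((k:ℝ)+1) * T / n), G β θ μ (F1inv β (y s))))
            + (T/n) * (G β θ μ (F1inv β (Y n (k+1)))
              - G β θ μ (F1inv β (y (((k:ℝ)+1) * T / n)))) := by
        linear_combination hYinc - hyinc
      have hstep := st18_step hK hh.le hsmall hone hdE
      refine le_trans hstep ?_
      have hE : |(Y n k - y ((k:ℝ) * T / n)) + ((T/n) * G β θ μ (F1inv β (y (((k:ℝ)+1) * T / n)))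
          - ∫ s in ((k:ℝ) * T / n)..(((k:ℝ)+1) * T / n), G β θ μ (F1inv β (y s)))|
          ≤ |Y n k - y ((k:ℝ) * T / n)| + L * Cy * (T/n) ^ α * (T/n) :=
        le_trans (abs_add_le _ _) (by linarith [hcons])
      exact mul_le_mul_of_nonneg_left hE (by positivity)
    intro k hk
    have hgron := st18_gronwall hc hB0 (fun j => |Y n j - y ((j:ℝ) * T / n)|)
      (by
        have h00 : ((0:ℕ):ℝ) * T / n = 0 := by norm_num
        show |Y n 0 - y (((0:ℕ):ℝ) * T / n)| = 0
        rw [h00, hY0, hy0, sub_self, abs_zero]) hrec k hk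
    refine le_trans hgron ?_
    have hcle : 2*(T/n)*K ≤ 1 := by linarith
    have hpow : (1 + 2*(T/n)*K) ^ k ≤ Real.exp (2*K*T) := by
      have h1 : (1 + 2*(T/n)*K) ^ k ≤ (1 + 2*(T/n)*K) ^ n :=
        pow_le_pow_right₀ (by linarith) hk
      have h2 : (1 + 2*(T/n)*K) ^ n ≤ Real.exp (2*(T/n)*K) ^ n :=
        pow_le_pow_left₀ (by positivity) (by linarith [Real.add_one_le_exp (2*(T/n)*K)]) n
      have h3 : Real.exp (2*(T/n)*K) ^ n = Real.exp (2*K*T) := by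
        rw [← Real.exp_nat_mul]
        congr 1
        field_simp
      linarith
    have hX : (1 + 2*(T/n)*K) * (L*Cy*(T/n)^α*(T/n)) / (2*(T/n)*K)
        = (1 + 2*(T/n)*K) * (L*Cy*(T/n)^α) / (2*K) := by
      field_simp
    rw [hX, hC1_def]
    have hq0 : (0:ℝ) ≤ (1 + 2*(T/n)*K)^k - 1 := by
      have : (1:ℝ) ≤ (1+2*(T/n)*K)^k := one_le_pow₀ (by linarith)
      linarith
    rw [div_mul_eq_mul_div, div_le_iff₀ (by positivity : (0:ℝ) < 2*K)]
    have hRHS : L*Cy/K*Real.exp (2*K*T)*(T/n)^α*(2*K)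
        = 2*(L*Cy*(T/n)^α)*Real.exp (2*K*T) := by
      field_simp
    rw [hRHS]
    have hP : (0:ℝ) ≤ L*Cy*(T/n)^α := by positivity
    nlinarith [mul_le_mul_of_nonneg_left hpow hP,
      mul_nonneg (mul_nonneg (by linarith : (0:ℝ) ≤ 1 - 2*(T/n)*K) hP) hq0,
      hP, Real.exp_pos (2*K*T)]
  set C2 : ℝ := C1 + Cy with hC2_def
  have hC2 : 0 < C2 := by rw [hC2_def]; positivity
  refine ⟨max (C2 * T ^ α) ((2*K*T + 1) ^ α) + 1, ?_, ?_⟩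
  · have h1 : (0:ℝ) ≤ (2*K*T + 1) ^ α := Real.rpow_nonneg (by positivity) _
    have h2 := le_max_right (C2 * T ^ α) ((2*K*T + 1) ^ α)
    linarith
  intro n hn t ht
  have hnR : (0:ℝ) < n := Nat.cast_pos.mpr hn
  have hnα : (0:ℝ) < (n:ℝ) ^ (-α) := Real.rpow_pos_of_pos hnR _
  obtain ⟨hY0, hYrec, hYmem⟩ := hY n hn
  have hintmem : interp T n (Y n) t ∈ Set.Icc 0 (F1 β 1) := by
    rcases st18_interp_cases hT hn (Y n) ht with ⟨heq, -⟩ | ⟨k, hkn, lam, hl0, hl1, heq, -, -⟩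
    · rw [heq]; exact ⟨(hYmem n le_rfl).1.le, (hYmem n le_rfl).2.le⟩
    · rw [heq]
      have h1 := hYmem k hkn.le
      have h2 := hYmem (k+1) hkn
      constructor
      · nlinarith [h1.1, h2.1]
      · nlinarith [h1.2, h2.2]
  have hyt := hym t ht
  have hFlip := st18_F1inv_lip hβ0 hβ1 hintmem ⟨hyt.1.le, hyt.2.le⟩
  by_cases hsmall : (T / (n:ℝ)) * K ≤ 1/2
  · have hhpos : (0:ℝ) < T / n := by positivity
    have hbound : |interp T n (Y n) t - y t| ≤ C2 * (T/n) ^ α := by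
      rcases st18_interp_cases hT hn (Y n) ht with ⟨heq, htT⟩ | ⟨k, hkn, lam, hl0, hl1, heq, hlo, hhi⟩
      · rw [heq, htT]
        have hnd := hnode n hn hsmall n le_rfl
        have hTn : (n:ℝ) * T / n = T := by field_simp
        rw [hTn] at hnd
        refine le_trans hnd ?_
        have h3 : (0:ℝ) < (T/n)^α := Real.rpow_pos_of_pos hhpos _
        rw [hC2_def]; nlinarith
      · have hke : ((k:ℝ)+1)*T/n = (k:ℝ)*T/n + T/n := by field_simp
        have hnd : ∀ j : ℕ, j ≤ n → |t - (j:ℝ)*T/n| ≤ T/n → |Y n j - y t| ≤ C2 * (T/n)^α := by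
          intro j hj hdist
          have htj : (j:ℝ)*T/n ∈ Set.Icc (0:ℝ) T := by
            have hkn' : (j:ℝ) ≤ n := Nat.cast_le.mpr hj
            constructor
            · positivity
            · rw [div_le_iff₀ hnR]; nlinarith
          have h1 := hnode n hn hsmall j hj
          have h2 : |y ((j:ℝ)*T/n) - y t| ≤ Cy * (T/n)^α := by
            refine le_trans (hyHol t ht ((j:ℝ)*T/n) htj) ?_
            refine mul_le_mul_of_nonneg_left ?_ hCy.le
            refine Real.rpow_le_rpow (abs_nonneg _) ?_ hα0.le
            rw [abs_sub_comm]
            exact hdist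
          calc |Y n j - y t| ≤ |Y n j - y ((j:ℝ)*T/n)| + |y ((j:ℝ)*T/n) - y t| :=
                abs_sub_le _ _ _
            _ ≤ C1*(T/n)^α + Cy*(T/n)^α := add_le_add h1 h2
            _ = C2 * (T/n)^α := by rw [hC2_def]; ring
        have hd1 : |t - (k:ℝ)*T/n| ≤ T/n := by
          rw [abs_le]
          constructor
          · linarith
          · linarith
        have hd2 : |t - ((k+1:ℕ):ℝ)*T/n| ≤ T/n := by
          push_cast
          rw [abs_le]
          constructor
          · linarith
          · linarith
        have hbk := hnd k hkn.le hd1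
        have hbk1 := hnd (k+1) hkn hd2
        rw [heq]
        have hsplit : (1-lam)*Y n k + lam*Y n (k+1) - y t
            = (1-lam)*(Y n k - y t) + lam*(Y n (k+1) - y t) := by ring
        rw [hsplit]
        calc |(1-lam)*(Y n k - y t) + lam*(Y n (k+1) - y t)|
            ≤ |(1-lam)*(Y n k - y t)| + |lam*(Y n (k+1) - y t)| := abs_add_le _ _
          _ = (1-lam)*|Y n k - y t| + lam*|Y n (k+1) - y t| := by
              rw [abs_mul, abs_mul, abs_of_nonneg (by linarith : (0:ℝ) ≤ 1 - lam),
                abs_of_nonneg hl0]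
          _ ≤ (1-lam)*(C2*(T/n)^α) + lam*(C2*(T/n)^α) :=
              add_le_add (mul_le_mul_of_nonneg_left hbk (by linarith))
                (mul_le_mul_of_nonneg_left hbk1 hl0)
          _ = C2*(T/n)^α := by ring
    refine le_trans hFlip (le_trans hbound ?_)
    have hconv : (T/n)^α = T^α * (n:ℝ)^(-α) := by
      rw [Real.div_rpow hT.le hnR.le, Real.rpow_neg hnR.le, div_eq_mul_inv]
    rw [hconv, ← mul_assoc]
    refine mul_le_mul_of_nonneg_right ?_ hnα.le
    have h4 := le_max_left (C2 * T ^ α) ((2*K*T + 1) ^ α)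
    linarith
  · have hcrude : |F1inv β (interp T n (Y n) t) - F1inv β (y t)| ≤ 1 := by
      have h1 := (st18_F1inv_spec hβ0 hβ1 hintmem).1
      have h2 := (st18_F1inv_spec hβ0 hβ1 ⟨hyt.1.le, hyt.2.le⟩).1
      rw [abs_le]
      constructor
      · linarith [h1.1, h2.2]
      · linarith [h1.2, h2.1]
    push_neg at hsmall
    have hn2KT : (n:ℝ) ≤ 2*K*T := by
      rw [div_mul_eq_mul_div, lt_div_iff₀ hnR] at hsmall
      linarith
    have hpow1 : (n:ℝ)^α ≤ (2*K*T+1)^α := Real.rpow_le_rpow hnR.le (by linarith) hα0.le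
    have hsplit : (n:ℝ)^α * (n:ℝ)^(-α) = 1 := by
      rw [← Real.rpow_add hnR]
      simp
    refine le_trans hcrude ?_
    have h3 : (1:ℝ) ≤ (2*K*T+1)^α * (n:ℝ)^(-α) := by
      calc (1:ℝ) = (n:ℝ)^α * (n:ℝ)^(-α) := hsplit.symm
        _ ≤ _ := mul_le_mul_of_nonneg_right hpow1 hnα.le
    refine le_trans h3 ?_
    refine mul_le_mul_of_nonneg_right ?_ hnα.le
    have h4 := le_max_right (C2 * T ^ α) ((2*K*T + 1) ^ α)
    linarith
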